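/- For n×n complex matrices A, the matrix q-exponential E_q(A^{p+1}x; Aθ) = e^{A^{p+1}x} Σ_{k=0}^p (Aθ)^k/[k]_q! satisfies D E_q(A^{p+1}x; Aθ) = A·E_q(A^{p+1}x; Aθ), and the order of the factors is irrelevant: e^{A^{p+1}x} Σ_{k=0}^p A^kθ^k/[k]_q! = (Σ_{k=0}^p A^kθ^k/[k]_q!) e^{A^{p+1}x}. -/

import Mathlib

open Complex Finset

/-- The `q`-integer `[n]_q = 1 + q + ⋯ + q^(n-1)`. -/
noncomputable def qint (q : ℂ) (n : ℕ) : ℂ := ∑ i ∈ Finset.range n, q ^ i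

/-- The `q`-factorial `[n]_q! = [1]_q [2]_q ⋯ [n]_q`, with `[0]_q! = 1`. -/
noncomputable def qfact (q : ℂ) (n : ℕ) : ℂ := ∏ i ∈ Finset.range n, qint q (i + 1)

attribute [local instance] Matrix.linftyOpNormedAddCommGroup Matrix.linftyOpNormedRing
  Matrix.linftyOpNormedAlgebra

lemma qpow_ne_one (p m : ℕ) (hm1 : 1 ≤ m) (hm2 : m ≤ p) :
    (Complex.exp (2 * Real.pi * Complex.I / (p + 1))) ^ m ≠ 1 := by
  intro hcon
  rw [← Complex.exp_nat_mul, Complex.exp_eq_one_iff] at hcon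
  obtain ⟨k, hk⟩ := hcon
  have hp1 : ((p : ℂ) + 1) ≠ 0 := by
    exact_mod_cast Nat.cast_add_one_ne_zero (R := ℂ) p
  have h2pi : (2 * Real.pi * Complex.I : ℂ) ≠ 0 := by
    simp [Real.pi_ne_zero, Complex.I_ne_zero]
  have hmc : (m : ℂ) * (2 * Real.pi * Complex.I)
      = (k * ((p : ℂ) + 1)) * (2 * Real.pi * Complex.I) := by
    field_simp at hk
    linear_combination (2 * Real.pi * Complex.I) * hk
  have : (m : ℂ) = k * (p + 1) := mul_right_cancel₀ h2pi hmc
  have hint : (m : ℤ) = k * (p + 1) := by exact_mod_cast this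
  rcases le_or_gt k 0 with h | h
  · have : (k : ℤ) * (p + 1) ≤ 0 := mul_nonpos_of_nonpos_of_nonneg h (by positivity)
    omega
  · have hk1 : (1 : ℤ) ≤ k := h
    have : ((p : ℤ) + 1) ≤ k * (p + 1) := le_mul_of_one_le_left (by positivity) hk1
    omega

lemma qint_ne_zero (p m : ℕ) (hp : 1 ≤ p) (hm1 : 1 ≤ m) (hm2 : m ≤ p) :
    qint (Complex.exp (2 * Real.pi * Complex.I / (p + 1))) m ≠ 0 := by
  set q := Complex.exp (2 * Real.pi * Complex.I / (p + 1)) with hq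
  have hq1 : q ≠ 1 := by
    have := qpow_ne_one p 1 le_rfl hp
    simpa using this
  rw [qint, geom_sum_eq hq1]
  exact div_ne_zero (sub_ne_zero.2 (qpow_ne_one p m hm1 hm2)) (sub_ne_zero.2 hq1)

/-- The matrix `q`-exponential `E_q(A^(p+1)x; Aθ) = e^(A^(p+1)x) Σ_{k=0}^p (Aθ)^k/[k]_q!`
(a matrix-valued parasuperfunction with components `W_k(x) = (A^k/[k]_q!) e^(A^(p+1)x)`)
satisfies `D E_q(A^(p+1)x; Aθ) = A · E_q(A^(p+1)x; Aθ)`, i.e. `[k+1]_q W_{k+1} = A W_k`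
for `k < p` and `(1/[p]_q!) W_0' = A W_p`; moreover the order of the factors is
irrelevant: `e^(A^(p+1)x) A^k = A^k e^(A^(p+1)x)`. -/
theorem matrix_qexp_derivative (p : ℕ) (hp : 1 ≤ p) (q : ℂ)
    (hq : q = Complex.exp (2 * Real.pi * Complex.I / (p + 1)))
    (n : ℕ) (A : Matrix (Fin n) (Fin n) ℂ)
    (W : ℕ → ℝ → Matrix (Fin n) (Fin n) ℂ)
    (hW : ∀ k ≤ p, ∀ x : ℝ,
      W k x = (qfact q k)⁻¹ • (A ^ k * NormedSpace.exp (x • A ^ (p + 1)))) :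
    (∀ k, k < p → ∀ x : ℝ, qint q (k + 1) • W (k + 1) x = A * W k x) ∧
    (∀ x : ℝ, (qfact q p)⁻¹ •
        Matrix.of (fun i j => deriv (fun t : ℝ => W 0 t i j) x) = A * W p x) ∧
    (∀ k ≤ p, ∀ x : ℝ,
      A ^ k * NormedSpace.exp (x • A ^ (p + 1))
        = NormedSpace.exp (x • A ^ (p + 1)) * A ^ k) := by
  refine ⟨?_, ?_, ?_⟩
  · intro k hk x
    rw [hW (k + 1) (by omega) x, hW k (by omega) x]
    have hfact : qfact q (k + 1) = qfact q k * qint q (k + 1) := by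
      rw [qfact, Finset.prod_range_succ, ← qfact]
    have hqi : qint q (k + 1) ≠ 0 := by
      rw [hq]; exact qint_ne_zero p (k + 1) hp (by omega) (by omega)
    rw [hfact, smul_smul, mul_inv, mul_comm ((qfact q k)⁻¹), ← mul_assoc,
      mul_inv_cancel₀ hqi, one_mul, mul_smul_comm, ← mul_assoc, ← pow_succ']
  · intro x
    set B := A ^ (p + 1) with hB
    have hW0 : ∀ t : ℝ, W 0 t = NormedSpace.exp (t • B) := by
      intro t
      rw [hW 0 (by omega) t]
      simp [qfact]
    have hder : HasDerivAt (fun t : ℝ => NormedSpace.exp (t • B))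
        (B * NormedSpace.exp (x • B)) x := by
      exact hasDerivAt_exp_smul_const' B x
    have hentry : ∀ i j : Fin n, deriv (fun t : ℝ => W 0 t i j) x
        = (B * NormedSpace.exp (x • B)) i j := by
      intro i j
      have : (fun t : ℝ => W 0 t i j) = fun t : ℝ => NormedSpace.exp (t • B) i j := by
        funext t; rw [hW0 t]
      rw [this]
      have hd : HasDerivAt (fun t : ℝ => NormedSpace.exp (t • B) i j)
          ((B * NormedSpace.exp (x • B)) i j) x := by
        have := (LinearMap.toContinuousLinearMap
            ((LinearMap.proj (R := ℝ) (φ := fun _ : Fin n => ℂ) j).comp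
              (LinearMap.proj (R := ℝ) (φ := fun _ : Fin n => Fin n → ℂ) i) :
                Matrix (Fin n) (Fin n) ℂ →ₗ[ℝ] ℂ)).hasFDerivAt.comp_hasDerivAt
              x hder
        exact this
      exact hd.deriv
    have : Matrix.of (fun i j => deriv (fun t : ℝ => W 0 t i j) x)
        = B * NormedSpace.exp (x • B) := by
      ext i j
      simp [hentry i j]
    rw [this, hW p le_rfl x, mul_smul_comm, hB, ← mul_assoc, ← pow_succ']
  · intro k _ x
    have hc : Commute (A ^ k) (x • A ^ (p + 1)) :=
      ((Commute.refl A).pow_pow k (p + 1)).smul_right x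
    exact hc.exp_right.eq
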